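/- Relational model property for Kleene algebra (Pratt): let e and f be regular expressions over an alphabet α. If for every type X and every map h : α → (X → X → Prop) the relational interpretations of e and f coincide (ĥ_rel e = ĥ_rel f), then for every Kleene algebra K and every map h : α → K, ĥ e = ĥ f. -/

import Mathlib

/-- Homomorphic extension of `h : α → K` to regular expressions. -/
def interp {α : Type*} {K : Type*} [KleeneAlgebra K] (h : α → K) :
    RegularExpression α → K
  | .zero => 0
  | .epsilon => 1
  | .char a => h a
  | .plus e f => interp h e + interp h f
  | .comp e f => interp h e * interp h f
  | .star e => KStar.kstar (interp h e)

/-- Relational interpretation of regular expressions. -/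
def rinterp {α X : Type*} (h : α → X → X → Prop) :
    RegularExpression α → X → X → Prop
  | .zero => fun _ _ => False
  | .epsilon => fun x y => x = y
  | .char a => h a
  | .plus e f => fun x y => rinterp h e x y ∨ rinterp h f x y
  | .comp e f => fun x z => ∃ y, rinterp h e x y ∧ rinterp h f y z
  | .star e => Relation.ReflTransGen (rinterp h e)

open Computability

namespace RMPaux

open RegularExpression

variable {α : Type*} {K : Type*} [KleeneAlgebra K]

lemma le_addl {a b : K} : a ≤ a + b := by rw [add_eq_sup]; exact le_sup_left
lemma le_addr {a b : K} : b ≤ a + b := by rw [add_eq_sup]; exact le_sup_right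

lemma kmul_le_mul_left {a b : K} (c : K) (h : a ≤ b) : c * a ≤ c * b := by
  have h2 : a + b = b := add_eq_right_iff_le.2 h
  have : c * a + c * b = c * b := by rw [← mul_add, h2]
  exact add_eq_right_iff_le.1 this

lemma kmul_le_mul_right {a b : K} (c : K) (h : a ≤ b) : a * c ≤ b * c := by
  have h2 : a + b = b := add_eq_right_iff_le.2 h
  have : a * c + b * c = b * c := by rw [← add_mul, h2]
  exact add_eq_right_iff_le.1 this

lemma kmul_le_mul {a b c d : K} (h1 : a ≤ b) (h2 : c ≤ d) : a * c ≤ b * d :=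
  le_trans (kmul_le_mul_right c h1) (kmul_le_mul_left b h2)

lemma lsum_le {β : Type*} {l : List β} {g : β → K} {c : K} (h : ∀ x ∈ l, g x ≤ c) :
    (l.map g).sum ≤ c := by
  induction l with
  | nil => simpa using zero_le c
  | cons x l ih =>
    simp only [List.map_cons, List.sum_cons]
    exact add_le (h x (by simp)) (ih fun y hy => h y (by simp [hy]))

lemma le_lsum {β : Type*} {l : List β} {g : β → K} {x : β} (hx : x ∈ l) :
    g x ≤ (l.map g).sum := by
  induction l with
  | nil => cases hx
  | cons y l ih =>
    rcases List.mem_cons.1 hx with h | h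
    · subst h; simp only [List.map_cons, List.sum_cons]; exact le_addl
    · simp only [List.map_cons, List.sum_cons]; exact le_trans (ih h) le_addr

lemma fsum_le {β : Type*} {s : Finset β} {g : β → K} {c : K} (h : ∀ x ∈ s, g x ≤ c) :
    (∑ x ∈ s, g x) ≤ c :=
  Finset.sum_induction g (· ≤ c) (fun _ _ ha hb => add_le ha hb) zero_le h

lemma le_fsum {β : Type*} {s : Finset β} {g : β → K} {x : β} (hx : x ∈ s) :
    g x ≤ ∑ y ∈ s, g y := by
  classical
  rw [← Finset.add_sum_erase s g hx]; exact le_addl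

section Pd

variable [DecidableEq α]

lemma eps_iff (g : RegularExpression α) : [] ∈ g.matches' ↔ g.matchEpsilon = true := by
  rw [← rmatch_iff_matches']
  rfl

/-- Antimirov partial derivatives. -/
def pd (a : α) : RegularExpression α → List (RegularExpression α)
  | zero => []
  | epsilon => []
  | char b => if a = b then [epsilon] else []
  | plus s t => pd a s ++ pd a t
  | comp s t => (pd a s).map (fun d => comp d t) ++ (if s.matchEpsilon then pd a t else [])
  | RegularExpression.star s => (pd a s).map (fun d => comp d (RegularExpression.star s))

/-- A finite set (list) of expressions containing all iterated partial derivatives. -/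
def cl : RegularExpression α → List (RegularExpression α)
  | zero => []
  | epsilon => []
  | char _ => [epsilon]
  | plus s t => cl s ++ cl t
  | comp s t => (cl s).map (fun d => comp d t) ++ cl t
  | RegularExpression.star s => (cl s).map (fun d => comp d (RegularExpression.star s))

lemma pd_sub_cl (a : α) : ∀ g : RegularExpression α, ∀ d ∈ pd a g, d ∈ cl g := by
  intro g
  induction g with
  | zero => intro d hd; simp [pd] at hd
  | epsilon => intro d hd; simp [pd] at hd
  | char b =>
    intro d hd
    by_cases h : a = b
    · simp [pd, h] at hd; simp [cl, hd]
    · simp [pd, h] at hd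
  | plus s t ihs iht =>
    intro d hd
    simp only [pd] at hd
    simp only [cl, List.mem_append]
    rcases List.mem_append.1 hd with h | h
    · exact Or.inl (ihs d h)
    · exact Or.inr (iht d h)
  | comp s t ihs iht =>
    intro d hd
    simp only [pd] at hd
    simp only [cl, List.mem_append]
    rcases List.mem_append.1 hd with h | h
    · rcases List.mem_map.1 h with ⟨c, hc, rfl⟩
      exact Or.inl (List.mem_map.2 ⟨c, ihs c hc, rfl⟩)
    · split at h
      · exact Or.inr (iht d h)
      · simp at h
  | star s ihs =>
    intro d hd
    simp only [pd] at hd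
    simp only [cl]
    rcases List.mem_map.1 hd with ⟨c, hc, rfl⟩
    exact List.mem_map.2 ⟨c, ihs c hc, rfl⟩

lemma cl_closed (a : α) :
    ∀ g : RegularExpression α, ∀ d ∈ cl g, ∀ d' ∈ pd a d, d' ∈ cl g := by
  intro g
  induction g with
  | zero => intro d hd; simp [cl] at hd
  | epsilon => intro d hd; simp [cl] at hd
  | char b =>
    intro d hd
    simp only [cl, List.mem_singleton] at hd
    subst hd
    intro d' hd'
    simp [pd] at hd'
  | plus s t ihs iht =>
    intro d hd d' hd'
    simp only [cl, List.mem_append] at hd ⊢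
    rcases hd with h | h
    · exact Or.inl (ihs d h d' hd')
    · exact Or.inr (iht d h d' hd')
  | comp s t ihs iht =>
    intro d hd d' hd'
    simp only [cl, List.mem_append] at hd ⊢
    rcases hd with h | h
    · rcases List.mem_map.1 h with ⟨c, hc, rfl⟩
      simp only [pd, List.mem_append] at hd'
      rcases hd' with h' | h'
      · rcases List.mem_map.1 h' with ⟨c', hc', rfl⟩
        exact Or.inl (List.mem_map.2 ⟨c', ihs c hc c' hc', rfl⟩)
      · split at h'
        · exact Or.inr (pd_sub_cl a t d' h')
        · simp at h'
    · exact Or.inr (iht d h d' hd')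
  | star s ihs =>
    intro d hd d' hd'
    simp only [cl] at hd ⊢
    rcases List.mem_map.1 hd with ⟨c, hc, rfl⟩
    simp only [pd, List.mem_append] at hd'
    rcases hd' with h' | h'
    · rcases List.mem_map.1 h' with ⟨c', hc', rfl⟩
      exact List.mem_map.2 ⟨c', ihs c hc c' hc', rfl⟩
    · split at h'
      · have := pd_sub_cl a (RegularExpression.star s) d' h'
        simpa only [cl] using this
      · simp at h'

lemma pd_sound {a : α} {w : List α} :
    ∀ {g : RegularExpression α}, (a :: w) ∈ g.matches' → ∃ d ∈ pd a g, w ∈ d.matches' := by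
  intro g
  induction g generalizing w with
  | zero => intro hm; simp at hm
  | epsilon => intro hm; simp [Language.mem_one] at hm
  | char b =>
    intro hm
    have hcw : a :: w = [b] := hm
    injection hcw with h1 h2
    subst h1; subst h2
    refine ⟨epsilon, ?_, ?_⟩
    · simp [pd]
    · simp [show (epsilon : RegularExpression α).matches' = 1 from rfl, Language.mem_one]
  | plus s t ihs iht =>
    intro hm
    rcases (Language.mem_add _ _ _).1 (by simpa using hm) with h | h
    · rcases ihs h with ⟨d, hd, hw⟩
      exact ⟨d, by simp only [pd, List.mem_append]; exact Or.inl hd, hw⟩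
    · rcases iht h with ⟨d, hd, hw⟩
      exact ⟨d, by simp only [pd, List.mem_append]; exact Or.inr hd, hw⟩
  | comp s t ihs iht =>
    intro hm
    rcases Language.mem_mul.1 (by simpa using hm) with ⟨u, hu, v, hv, huv⟩
    cases u with
    | nil =>
      have he : s.matchEpsilon = true := (eps_iff s).1 hu
      simp only [List.nil_append] at huv
      subst huv
      rcases iht hv with ⟨d, hd, hw⟩
      refine ⟨d, ?_, hw⟩
      simp only [pd, List.mem_append]
      exact Or.inr (by rw [if_pos he]; exact hd)
    | cons b u' =>
      have hb : b = a := by cases huv; rfl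
      subst hb
      have hw : w = u' ++ v := by cases huv; rfl
      rcases ihs hu with ⟨d, hd, hu'⟩
      refine ⟨comp d t, ?_, ?_⟩
      · simp only [pd, List.mem_append]
        exact Or.inl (List.mem_map.2 ⟨d, hd, rfl⟩)
      · rw [hw]
        show u' ++ v ∈ d.matches' * t.matches'
        exact Language.append_mem_mul hu' hv
  | star s ihs =>
    intro hm
    rw [show (RegularExpression.star s).matches' = s.matches'∗ from rfl] at hm
    rcases Language.mem_kstar_iff_exists_nonempty.1 hm with ⟨S, hS, hall⟩
    cases S with
    | nil => simp at hS
    | cons u S' =>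
      rcases hall u (by simp) with ⟨hu, hune⟩
      cases u with
      | nil => exact absurd rfl hune
      | cons b u' =>
        simp only [List.flatten_cons, List.cons_append] at hS
        have hb : b = a := by cases hS; rfl
        subst hb
        have hw : w = u' ++ S'.flatten := by cases hS; rfl
        rcases ihs hu with ⟨d, hd, hu'⟩
        refine ⟨comp d (RegularExpression.star s), ?_, ?_⟩
        · simp only [pd]
          exact List.mem_map.2 ⟨d, hd, rfl⟩
        · rw [hw]
          show u' ++ S'.flatten ∈ d.matches' * (RegularExpression.star s).matches'
          refine Language.append_mem_mul hu' ?_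
          rw [show (RegularExpression.star s).matches' = s.matches'∗ from rfl]
          exact Language.join_mem_kstar fun y hy => (hall y (by simp [hy])).1

end Pd

end RMPaux

namespace RMPaux
open RegularExpression
variable {α : Type*} {K : Type*} [KleeneAlgebra K]

section InterpLem

variable (hK : α → K)

lemma one_le_interp : ∀ {g : RegularExpression α}, [] ∈ g.matches' → 1 ≤ interp hK g := by
  intro g
  induction g with
  | zero => intro hm; simp at hm
  | epsilon => intro _; simp [interp]
  | char b =>
    intro hm
    have : ([] : List α) = [b] := hm
    simp at this
  | plus s t ihs iht =>
    intro hm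
    rcases (Language.mem_add _ _ _).1 (by simpa using hm) with hmem | hmem
    · exact le_trans (ihs hmem) (by simp only [interp]; exact le_self_add)
    · exact le_trans (iht hmem) (by simp only [interp]; exact le_add_self)
  | comp s t ihs iht =>
    intro hm
    rcases Language.mem_mul.1 (by simpa using hm) with ⟨u, hu, v, hv, huv⟩
    obtain ⟨rfl, rfl⟩ := List.append_eq_nil_iff.1 huv
    simp only [interp]
    calc (1 : K) = 1 * 1 := (one_mul 1).symm
    _ ≤ interp hK s * interp hK t := mul_le_mul' (ihs hu) (iht hv)
  | star s _ =>
    intro _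
    simp only [interp]
    exact one_le_kstar

variable [DecidableEq α]

lemma pd_le_interp (a : α) :
    ∀ {g : RegularExpression α}, ∀ d ∈ pd a g, hK a * interp hK d ≤ interp hK g := by
  intro g
  induction g with
  | zero => intro d hd; simp [pd] at hd
  | epsilon => intro d hd; simp [pd] at hd
  | char b =>
    intro d hd
    by_cases h : a = b
    · simp only [pd, if_pos h, List.mem_singleton] at hd
      subst hd
      simp only [interp, mul_one]
      exact le_of_eq (by rw [h])
    · simp [pd, h] at hd
  | plus s t ihs iht =>
    intro d hd
    simp only [pd, List.mem_append] at hd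
    simp only [interp]
    rcases hd with h | h
    · exact le_trans (ihs d h) le_self_add
    · exact le_trans (iht d h) le_add_self
  | comp s t ihs iht =>
    intro d hd
    simp only [pd, List.mem_append] at hd
    simp only [interp]
    rcases hd with h | h
    · rcases List.mem_map.1 h with ⟨c, hc, rfl⟩
      have heq : hK a * interp hK (comp c t) = (hK a * interp hK c) * interp hK t := by
        simp only [interp]; rw [mul_assoc]
      rw [heq]
      exact mul_le_mul_left (ihs c hc) _
    · split at h
      case isTrue he =>
        have h1 : (1 : K) ≤ interp hK s := one_le_interp hK ((eps_iff s).2 he)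
        calc hK a * interp hK d ≤ interp hK t := iht d h
        _ = 1 * interp hK t := (one_mul _).symm
        _ ≤ interp hK s * interp hK t := mul_le_mul_left h1 _
      case isFalse => simp at h
  | star s ihs =>
    intro d hd
    simp only [pd] at hd
    rcases List.mem_map.1 hd with ⟨c, hc, rfl⟩
    simp only [interp]
    have heq : hK a * (interp hK c * (interp hK s)∗) = (hK a * interp hK c) * (interp hK s)∗ := by
      rw [mul_assoc]
    rw [heq]
    calc (hK a * interp hK c) * (interp hK s)∗
        ≤ interp hK s * (interp hK s)∗ := mul_le_mul_left (ihs c hc) _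
    _ ≤ (interp hK s)∗ := mul_kstar_le_kstar

end InterpLem

section SA

variable {Q : Type*}

/-- `sa M l i j`: value of paths from `i` to `j` with at least one step, all of whose
intermediate states lie in `l` (McNaughton–Yamada / Floyd–Warshall elimination). -/
noncomputable def sa (M : Q → Q → K) : List Q → Q → Q → K
  | [] => M
  | q :: l => fun i j => sa M l i j + sa M l i q * (sa M l q q)∗ * sa M l q j

lemma le_sa (M : Q → Q → K) : ∀ (l : List Q) (i j : Q), M i j ≤ sa M l i j := by
  intro l
  induction l with
  | nil => intro i j; exact le_refl _
  | cons q l ih =>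
    intro i j
    simp only [sa]
    exact le_trans (ih i j) le_self_add

lemma sa_sound {M : Q → Q → K} {z : Q → K} (hz : ∀ i j, M i j * z j ≤ z i) :
    ∀ (l : List Q) (i j : Q), sa M l i j * z j ≤ z i := by
  intro l
  induction l with
  | nil => exact hz
  | cons q l ih =>
    intro i j
    simp only [sa, add_mul]
    apply add_le (ih i j)
    have h1 : (sa M l q q)∗ * z q ≤ z q := kstar_mul_le_self (ih q q)
    calc sa M l i q * (sa M l q q)∗ * sa M l q j * z j
        = sa M l i q * ((sa M l q q)∗ * (sa M l q j * z j)) := by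
          rw [mul_assoc, mul_assoc]
    _ ≤ sa M l i q * ((sa M l q q)∗ * z q) := by
          exact mul_le_mul_right (mul_le_mul_right (ih q j) _) _
    _ ≤ sa M l i q * z q := mul_le_mul_right h1 _
    _ ≤ z i := ih i q

lemma star_mul_le {s X : K} : s * (s∗ * X) ≤ s∗ * X := by
  rw [← mul_assoc]; exact mul_le_mul_left mul_kstar_le_kstar _

lemma star_mul_le' {s X : K} : s∗ * (s * X) ≤ s∗ * X := by
  rw [← mul_assoc]; exact mul_le_mul_left kstar_mul_le_kstar _

lemma star_star_mul {s X : K} : s∗ * (s∗ * X) = s∗ * X := by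
  rw [← mul_assoc, kstar_mul_kstar]

lemma le_star_mul {s X : K} : X ≤ s∗ * X := by
  conv_lhs => rw [← one_mul X]
  exact mul_le_mul_left one_le_kstar _

lemma sa_comp {M : Q → Q → K} : ∀ (l : List Q) (i j k : Q), j ∈ l →
    sa M l i j * sa M l j k ≤ sa M l i k := by
  intro l
  induction l with
  | nil => intro i j k h; cases h
  | cons q l ih =>
    intro i j k hj
    simp only [sa]
    rw [add_mul, mul_add, mul_add]
    rcases List.mem_cons.1 hj with rfl | hjl
    · -- pivot equals j
      refine add_le (add_le ?_ ?_) (add_le ?_ ?_)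
      · refine le_trans ?_ le_add_self
        simp only [mul_assoc]
        exact mul_le_mul_right le_star_mul _
      · refine le_trans ?_ le_add_self
        simp only [mul_assoc]
        exact mul_le_mul_right star_mul_le _
      · refine le_trans ?_ le_add_self
        simp only [mul_assoc]
        exact mul_le_mul_right star_mul_le' _
      · refine le_trans ?_ le_add_self
        simp only [mul_assoc]
        refine mul_le_mul_right ?_ _
        refine le_trans (mul_le_mul_right (mul_le_mul_right star_mul_le _) _) ?_
        exact le_trans (mul_le_mul_right star_mul_le _) (le_of_eq star_star_mul)
    · -- j ∈ l
      refine add_le (add_le ?_ ?_) (add_le ?_ ?_)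
      · exact le_trans (ih i j k hjl) le_self_add
      · refine le_trans ?_ le_add_self
        simp only [mul_assoc]
        rw [← mul_assoc (sa M l i j) (sa M l j q) _]
        exact mul_le_mul_left (ih i j q hjl) _
      · refine le_trans ?_ le_add_self
        simp only [mul_assoc]
        exact mul_le_mul_right (mul_le_mul_right (ih q j k hjl) _) _
      · refine le_trans ?_ le_add_self
        simp only [mul_assoc]
        refine mul_le_mul_right ?_ _
        rw [← mul_assoc (sa M l q j) (sa M l j q) _]
        refine le_trans (mul_le_mul_right (mul_le_mul_left (ih q j q hjl) _) _) ?_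
        exact le_trans (mul_le_mul_right star_mul_le _) (le_of_eq star_star_mul)

/-- Reflexive closure of `sa`: path values (including the empty path). -/
noncomputable def P [DecidableEq Q] (M : Q → Q → K) (l : List Q) (i j : Q) : K :=
  (if i = j then 1 else 0) + sa M l i j

variable [DecidableEq Q]

lemma one_le_P_diag (M : Q → Q → K) (l : List Q) (i : Q) : 1 ≤ P M l i i := by
  simp only [P, eq_self_iff_true, if_true]
  exact le_self_add

lemma M_le_P (M : Q → Q → K) (l : List Q) (i j : Q) : M i j ≤ P M l i j :=
  le_trans (le_sa M l i j) le_add_self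

lemma P_sound {M : Q → Q → K} {z : Q → K} (hz : ∀ i j, M i j * z j ≤ z i)
    (l : List Q) (i j : Q) : P M l i j * z j ≤ z i := by
  simp only [P, add_mul]
  apply add_le
  · split
    case isTrue h => subst h; rw [one_mul]
    case isFalse => rw [zero_mul]; exact zero_le
  · exact sa_sound hz l i j

lemma P_comp {M : Q → Q → K} {l : List Q} {i j k : Q} (hj : j ∈ l) :
    P M l i j * P M l j k ≤ P M l i k := by
  unfold P
  rw [add_mul, mul_add, mul_add]
  refine add_le (add_le ?_ ?_) (add_le ?_ ?_)
  · by_cases hij : i = j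
    · by_cases hjk : j = k
      · subst hij; subst hjk
        simp only [eq_self_iff_true, if_true, one_mul]
        exact le_self_add
      · simp only [if_neg hjk, mul_zero]
        exact zero_le
    · simp only [if_neg hij, zero_mul]
      exact zero_le
  · by_cases hij : i = j
    · subst hij
      simp only [eq_self_iff_true, if_true, one_mul]
      exact le_add_self
    · simp only [if_neg hij, zero_mul]
      exact zero_le
  · by_cases hjk : j = k
    · subst hjk
      simp only [eq_self_iff_true, if_true, mul_one]
      exact le_add_self
    · simp only [if_neg hjk, mul_zero]
      exact zero_le
  · exact le_trans (sa_comp l i j k hj) le_add_self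

end SA

end RMPaux

namespace RMPaux
open RegularExpression
variable {α : Type*} {K : Type*} [KleeneAlgebra K]

/-- letters occurring in a regular expression -/
def lets : RegularExpression α → List α
  | zero => []
  | epsilon => []
  | char a => [a]
  | plus s t => lets s ++ lets t
  | comp s t => lets s ++ lets t
  | RegularExpression.star s => lets s

lemma kstar_app {l : Language α} {p q : List α} (hp : p ∈ l∗) (hq : q ∈ l) : p ++ q ∈ l∗ := by
  rcases Language.mem_kstar.1 hp with ⟨S, rfl, hS⟩
  have : S.flatten ++ q = (S ++ [q]).flatten := by simp
  rw [this]
  refine Language.join_mem_kstar ?_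
  intro y hy
  rcases List.mem_append.1 hy with h | h
  · exact hS y h
  · simp only [List.mem_singleton] at h; subst h; exact hq

section DFA

attribute [local instance] Classical.propDecidable

variable [DecidableEq α]
variable (hK : α → K) (F : RegularExpression α) (ls : List α)

/-- closure list with seed -/
noncomputable def CL : List (RegularExpression α) := F :: cl F

lemma CL_closed (a : α) : ∀ g ∈ CL F, ∀ d ∈ pd a g, d ∈ CL F := by
  intro g hg d hd
  rcases List.mem_cons.1 hg with rfl | hg
  · exact List.mem_cons.2 (Or.inr (pd_sub_cl a g d hd))
  · exact List.mem_cons.2 (Or.inr (cl_closed a F g hg d hd))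

/-- state type: sets of indices into the closure list -/
noncomputable def dlt (a : α) (S : Finset (Fin (CL F).length)) : Finset (Fin (CL F).length) :=
  Finset.univ.filter (fun j => ∃ i ∈ S, (CL F).get j ∈ pd a ((CL F).get i))

noncomputable def SV (S : Finset (Fin (CL F).length)) : K :=
  ∑ j ∈ S, interp hK ((CL F).get j)

lemma step_val (a : α) (S : Finset (Fin (CL F).length)) :
    hK a * SV hK F (dlt F a S) ≤ SV hK F S := by
  simp only [SV, Finset.mul_sum]
  refine fsum_le ?_
  intro j hj
  rcases Finset.mem_filter.1 hj with ⟨-, i, hi, hpd⟩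
  exact le_trans (pd_le_interp hK a _ hpd) (le_fsum (g := fun j => interp hK ((CL F).get j)) hi)

/-- transition matrix -/
noncomputable def TM (S T : Finset (Fin (CL F).length)) : K :=
  (ls.map (fun a => if dlt F a S = T then hK a else 0)).sum

lemma lsum_mul {β : Type*} (l : List β) (g : β → K) (b : K) :
    (l.map g).sum * b = (l.map (fun x => g x * b)).sum := by
  induction l with
  | nil => simp
  | cons x l ih => simp only [List.map_cons, List.sum_cons, add_mul, ih]

lemma TM_sound (S T : Finset (Fin (CL F).length)) :
    TM hK F ls S T * SV hK F T ≤ SV hK F S := by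
  rw [TM, lsum_mul]
  refine lsum_le ?_
  intro a ha
  split
  case isTrue h => rw [← h]; exact step_val hK F a S
  case isFalse => rw [zero_mul]; exact zero_le

lemma h_le_TM {a : α} (ha : a ∈ ls) (S : Finset (Fin (CL F).length)) :
    hK a ≤ TM hK F ls S (dlt F a S) := by
  rw [TM]
  have h := le_lsum (l := ls) (g := fun a' => if dlt F a' S = dlt F a S then hK a' else 0) ha
  simp only [eq_self_iff_true, if_true] at h
  exact h

/-- list of all states -/
noncomputable def uL : List (Finset (Fin (CL F).length)) := Finset.univ.toList

/-- path values -/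
noncomputable def PP (S T : Finset (Fin (CL F).length)) : K :=
  P (TM hK F ls) (uL F) S T

lemma PP_comp {S T U : Finset (Fin (CL F).length)} :
    PP hK F ls S T * PP hK F ls T U ≤ PP hK F ls S U :=
  P_comp (Finset.mem_toList.2 (Finset.mem_univ T))

lemma PP_sound (S T : Finset (Fin (CL F).length)) :
    PP hK F ls S T * SV hK F T ≤ SV hK F S :=
  P_sound (fun i j => TM_sound hK F ls i j) _ S T

/-- multi-step transition -/
noncomputable def dlts (w : List α) (S : Finset (Fin (CL F).length)) :
    Finset (Fin (CL F).length) :=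
  w.foldl (fun S a => dlt F a S) S

lemma dlts_append (w v : List α) (S : Finset (Fin (CL F).length)) :
    dlts F (w ++ v) S = dlts F v (dlts F w S) :=
  List.foldl_append ..

/-- states reachable under words of `g` -/
noncomputable def Rch (g : RegularExpression α) (S : Finset (Fin (CL F).length)) :
    Finset (Finset (Fin (CL F).length)) :=
  Finset.univ.filter (fun T => ∃ w ∈ g.matches', dlts F w S = T)

lemma mem_Rch {g : RegularExpression α} {S T : Finset (Fin (CL F).length)}
    {w : List α} (hw : w ∈ g.matches') (hT : dlts F w S = T) : T ∈ Rch F g S :=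
  Finset.mem_filter.2 ⟨Finset.mem_univ _, w, hw, hT⟩

lemma main_ind (e : RegularExpression α) :
    (∀ a ∈ lets e, a ∈ ls) → ∀ S : Finset (Fin (CL F).length),
    interp hK e ≤ ∑ T ∈ Rch F e S, PP hK F ls S T := by
  induction e with
  | zero => intro _ S; simp only [interp]; exact zero_le
  | epsilon =>
    intro _ S
    simp only [interp]
    refine le_trans (one_le_P_diag (TM hK F ls) (uL F) S) (le_fsum ?_)
    exact mem_Rch F (w := []) (by simp [Language.mem_one]) rfl
  | char a =>
    intro hsub S
    simp only [interp]
    have ha : a ∈ ls := hsub a (by simp [lets])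
    refine le_trans (h_le_TM hK F ls ha S) (le_trans (M_le_P _ _ _ _) (le_fsum ?_))
    exact mem_Rch F (w := [a]) rfl rfl
  | plus s t ihs iht =>
    intro hsub S
    simp only [interp]
    have hs : ∀ a ∈ lets s, a ∈ ls := fun a ha => hsub a (by simp [lets, ha])
    have ht : ∀ a ∈ lets t, a ∈ ls := fun a ha => hsub a (by simp [lets, ha])
    refine add_le (le_trans (ihs hs S) (fsum_le ?_)) (le_trans (iht ht S) (fsum_le ?_))
    · intro T hT
      rcases Finset.mem_filter.1 hT with ⟨-, w, hw, hT'⟩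
      refine le_fsum (mem_Rch F ?_ hT')
      exact (Language.mem_add _ _ _).2 (Or.inl hw)
    · intro T hT
      rcases Finset.mem_filter.1 hT with ⟨-, w, hw, hT'⟩
      refine le_fsum (mem_Rch F ?_ hT')
      exact (Language.mem_add _ _ _).2 (Or.inr hw)
  | comp s t ihs iht =>
    intro hsub S
    simp only [interp]
    have hs : ∀ a ∈ lets s, a ∈ ls := fun a ha => hsub a (by simp [lets, ha])
    have ht : ∀ a ∈ lets t, a ∈ ls := fun a ha => hsub a (by simp [lets, ha])
    calc interp hK s * interp hK t
        ≤ (∑ T1 ∈ Rch F s S, PP hK F ls S T1) * interp hK t :=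
          mul_le_mul_left (ihs hs S) _
    _ = ∑ T1 ∈ Rch F s S, PP hK F ls S T1 * interp hK t := Finset.sum_mul ..
    _ ≤ ∑ T ∈ Rch F (comp s t) S, PP hK F ls S T := by
        refine fsum_le ?_
        intro T1 hT1
        rcases Finset.mem_filter.1 hT1 with ⟨-, w1, hw1, hT1'⟩
        calc PP hK F ls S T1 * interp hK t
            ≤ PP hK F ls S T1 * ∑ T2 ∈ Rch F t T1, PP hK F ls T1 T2 :=
              mul_le_mul_right (iht ht T1) _
        _ = ∑ T2 ∈ Rch F t T1, PP hK F ls S T1 * PP hK F ls T1 T2 := Finset.mul_sum ..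
        _ ≤ ∑ T ∈ Rch F (comp s t) S, PP hK F ls S T := by
            refine fsum_le ?_
            intro T2 hT2
            rcases Finset.mem_filter.1 hT2 with ⟨-, w2, hw2, hT2'⟩
            have hmem : T2 ∈ Rch F (comp s t) S :=
              mem_Rch F (w := w1 ++ w2) (Language.append_mem_mul hw1 hw2)
                (by rw [dlts_append, hT1', hT2'])
            exact le_trans (PP_comp hK F ls) (le_fsum hmem)
  | star s ihs =>
    intro hsub S
    have hs : ∀ a ∈ lets s, a ∈ ls := fun a ha => hsub a (by simpa [lets] using ha)
    have h1 : (1 : K) ≤ ∑ T ∈ Rch F (RegularExpression.star s) S, PP hK F ls S T := by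
      refine le_trans (one_le_P_diag (TM hK F ls) (uL F) S) (le_fsum ?_)
      refine mem_Rch F (w := []) ?_ rfl
      show ([] : List α) ∈ s.matches'∗
      exact Language.nil_mem_kstar _
    have hX : (∑ T ∈ Rch F (RegularExpression.star s) S, PP hK F ls S T) * interp hK s ≤
        ∑ T ∈ Rch F (RegularExpression.star s) S, PP hK F ls S T := by
      rw [Finset.sum_mul]
      refine fsum_le ?_
      intro T1 hT1
      rcases Finset.mem_filter.1 hT1 with ⟨-, w1, hw1, hT1'⟩
      calc PP hK F ls S T1 * interp hK s
          ≤ PP hK F ls S T1 * ∑ T2 ∈ Rch F s T1, PP hK F ls T1 T2 :=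
            mul_le_mul_right (ihs hs T1) _
      _ = ∑ T2 ∈ Rch F s T1, PP hK F ls S T1 * PP hK F ls T1 T2 := Finset.mul_sum ..
      _ ≤ ∑ T ∈ Rch F (RegularExpression.star s) S, PP hK F ls S T := by
          refine fsum_le ?_
          intro T2 hT2
          rcases Finset.mem_filter.1 hT2 with ⟨-, w2, hw2, hT2'⟩
          have hmem : T2 ∈ Rch F (RegularExpression.star s) S :=
            mem_Rch F (w := w1 ++ w2) (kstar_app hw1 hw2)
              (by rw [dlts_append, hT1', hT2'])
          exact le_trans (PP_comp hK F ls) (le_fsum hmem)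
    simp only [interp]
    calc (interp hK s)∗ = 1 * (interp hK s)∗ := (one_mul _).symm
    _ ≤ (∑ T ∈ Rch F (RegularExpression.star s) S, PP hK F ls S T) * (interp hK s)∗ :=
        mul_le_mul_left h1 _
    _ ≤ ∑ T ∈ Rch F (RegularExpression.star s) S, PP hK F ls S T := mul_kstar_le_self hX

lemma accept_fwd : ∀ (w : List α) (S : Finset (Fin (CL F).length)),
    (∃ i ∈ S, w ∈ ((CL F).get i).matches') →
    ∃ j ∈ dlts F w S, [] ∈ ((CL F).get j).matches' := by
  intro w
  induction w with
  | nil => exact fun S h => h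
  | cons a w ih =>
    rintro S ⟨i, hi, hm⟩
    rcases pd_sound hm with ⟨d, hd, hw⟩
    have hdCL : d ∈ CL F := CL_closed F a ((CL F).get i) (List.get_mem _ i) d hd
    rcases List.mem_iff_get.1 hdCL with ⟨j, hj⟩
    refine ih (dlt F a S) ⟨j, ?_, ?_⟩
    · exact Finset.mem_filter.2 ⟨Finset.mem_univ _, i, hi, by rw [hj]; exact hd⟩
    · rw [hj]; exact hw

lemma le_of_lang_le (e f : RegularExpression α)
    (hL : ∀ w, w ∈ e.matches' → w ∈ f.matches') : interp hK e ≤ interp hK f := by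
  have hpos : 0 < (CL f).length := by simp [CL]
  set i0 : Fin (CL f).length := ⟨0, hpos⟩ with hi0
  have hget : (CL f).get i0 = f := rfl
  set S0 : Finset (Fin (CL f).length) := {i0} with hS0
  have hSV : SV hK f S0 = interp hK f := by
    rw [SV, hS0, Finset.sum_singleton, hget]
  calc interp hK e
      ≤ ∑ T ∈ Rch f e S0, PP hK f (lets e) S0 T := main_ind hK f (lets e) e (fun _ ha => ha) S0
  _ ≤ SV hK f S0 := by
      refine fsum_le ?_
      intro T hT
      rcases Finset.mem_filter.1 hT with ⟨-, w, hw, hT'⟩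
      have hacc : ∃ j ∈ dlts f w S0, [] ∈ ((CL f).get j).matches' :=
        accept_fwd f w S0 ⟨i0, Finset.mem_singleton_self i0, by rw [hget]; exact hL w hw⟩
      rcases hacc with ⟨j, hjmem, hjeps⟩
      rw [hT'] at hjmem
      have h1 : (1 : K) ≤ SV hK f T := by
        rw [SV]
        exact le_trans (one_le_interp hK hjeps)
          (le_fsum (g := fun j => interp hK ((CL f).get j)) hjmem)
      calc PP hK f (lets e) S0 T = PP hK f (lets e) S0 T * 1 := (mul_one _).symm
      _ ≤ PP hK f (lets e) S0 T * SV hK f T := mul_le_mul_right h1 _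
      _ ≤ SV hK f S0 := PP_sound hK f (lets e) S0 T
  _ = interp hK f := hSV

end DFA

end RMPaux

namespace RMPaux

universe v

section Model

variable {α : Type*}

lemma drop_inj {w : List α} {i j : ℕ} (hi : i ≤ w.length) (hj : j ≤ w.length)
    (h : w.drop i = w.drop j) : i = j := by
  have hl := congrArg List.length h
  simp only [List.length_drop] at hl
  omega

lemma drop_split {w v r : List α} {i : ℕ} (hi : i ≤ w.length) (h : w.drop i = v ++ r) :
    i + v.length ≤ w.length ∧ w.drop (i + v.length) = r := by
  have hl := congrArg List.length h
  simp only [List.length_drop, List.length_append] at hl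
  refine ⟨by omega, ?_⟩
  rw [← List.drop_drop, h, List.drop_left]

/-- the chain model associated to a word `w` -/
def chRel (w : List α) (a : α) (x y : ULift.{v} (Fin (w.length + 1))) : Prop :=
  ∃ (k : ℕ) (hk : k < w.length), w.get ⟨k, hk⟩ = a ∧ x.down.val = k ∧ y.down.val = k + 1

lemma st_le (w : List α) (x : ULift.{v} (Fin (w.length + 1))) : x.down.val ≤ w.length :=
  Nat.lt_succ_iff.1 x.down.isLt

lemma st_ext {w : List α} {x y : ULift.{v} (Fin (w.length + 1))}
    (h : x.down.val = y.down.val) : x = y :=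
  ULift.down_injective (Fin.ext h)

lemma model_iff (w : List α) (g : RegularExpression α) :
    ∀ x y : ULift.{v} (Fin (w.length + 1)),
    rinterp (chRel w) g x y ↔
      ∃ u ∈ g.matches', w.drop x.down.val = u ++ w.drop y.down.val := by
  induction g with
  | zero =>
    intro x y
    simp only [rinterp, RegularExpression.matches'_zero]
    constructor
    · intro h; exact h.elim
    · rintro ⟨u, hu, -⟩; exact (Language.notMem_zero u hu).elim
  | epsilon =>
    intro x y
    simp only [rinterp, RegularExpression.matches'_epsilon]
    constructor
    · rintro rfl
      exact ⟨[], Language.nil_mem_one, rfl⟩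
    · rintro ⟨u, hu, h⟩
      have hu' : u = [] := hu
      subst hu'
      rw [List.nil_append] at h
      exact st_ext (drop_inj (st_le w x) (st_le w y) h)
  | char a =>
    intro x y
    simp only [rinterp, RegularExpression.matches'_char]
    constructor
    · rintro ⟨k, hk, hka, hx, hy⟩
      refine ⟨[a], rfl, ?_⟩
      rw [hx, hy, List.drop_eq_getElem_cons hk]
      simp only [List.cons_append, List.nil_append]
      rw [← hka]
      simp [List.get_eq_getElem]
    · rintro ⟨u, hu, h⟩
      have hu' : u = [a] := hu
      subst hu'
      have hsp := drop_split (st_le w x) h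
      have hk : x.down.val < w.length := by
        have := hsp.1; simp at this; omega
      refine ⟨x.down.val, hk, ?_, rfl, ?_⟩
      · have hc := List.drop_eq_getElem_cons (l := w) hk
        rw [hc] at h
        simp only [List.singleton_append] at h
        have h1 : w[x.down.val] = a := (List.cons.inj h).1
        rw [List.get_eq_getElem]
        exact h1
      · -- y.down.val = x.down.val + 1
        have h2 := hsp.2
        simp only [List.length_singleton] at h2
        exact (drop_inj (by omega) (st_le w y) h2).symm ▸ rfl
  | plus s t ihs iht =>
    intro x y
    simp only [rinterp, RegularExpression.matches'_add]
    constructor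
    · rintro (h | h)
      · rcases (ihs x y).1 h with ⟨u, hu, he⟩
        exact ⟨u, (Language.mem_add _ _ _).2 (Or.inl hu), he⟩
      · rcases (iht x y).1 h with ⟨u, hu, he⟩
        exact ⟨u, (Language.mem_add _ _ _).2 (Or.inr hu), he⟩
    · rintro ⟨u, hu, he⟩
      rcases (Language.mem_add _ _ _).1 hu with h | h
      · exact Or.inl ((ihs x y).2 ⟨u, h, he⟩)
      · exact Or.inr ((iht x y).2 ⟨u, h, he⟩)
  | comp s t ihs iht =>
    intro x y
    simp only [rinterp, RegularExpression.matches'_mul]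
    constructor
    · rintro ⟨m, h1, h2⟩
      rcases (ihs x m).1 h1 with ⟨u1, hu1, he1⟩
      rcases (iht m y).1 h2 with ⟨u2, hu2, he2⟩
      refine ⟨u1 ++ u2, Language.append_mem_mul hu1 hu2, ?_⟩
      rw [he1, he2, List.append_assoc]
    · rintro ⟨u, hu, he⟩
      rcases Language.mem_mul.1 hu with ⟨u1, hu1, u2, hu2, huu⟩
      subst huu
      rw [List.append_assoc] at he
      have hsp := drop_split (st_le w x) he
      set k : ℕ := x.down.val + u1.length with hk
      have hkle : k ≤ w.length := hsp.1
      refine ⟨⟨⟨k, by omega⟩⟩, ?_, ?_⟩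
      · exact (ihs x _).2 ⟨u1, hu1, by
          rw [he]
          congr 1
          exact hsp.2.symm⟩
      · exact (iht _ y).2 ⟨u2, hu2, hsp.2⟩
  | star s ihs =>
    intro x y
    simp only [rinterp, RegularExpression.matches'_star]
    constructor
    · intro h
      induction h with
      | refl => exact ⟨[], Language.nil_mem_kstar _, rfl⟩
      | tail hab hbc ih =>
        rcases ih with ⟨u, hu, he⟩
        rcases (ihs _ _).1 hbc with ⟨u2, hu2, he2⟩
        refine ⟨u ++ u2, kstar_app hu hu2, ?_⟩
        rw [he, he2, List.append_assoc]
    · rintro ⟨u, hu, he⟩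
      rcases Language.mem_kstar.1 hu with ⟨S, rfl, hall⟩
      clear hu
      induction S generalizing x with
      | nil =>
        simp only [List.flatten_nil, List.nil_append] at he
        have : x = y := st_ext (drop_inj (st_le w x) (st_le w y) he)
        subst this
        exact Relation.ReflTransGen.refl
      | cons c S' ihS =>
        simp only [List.flatten_cons, List.append_assoc] at he
        have hsp := drop_split (st_le w x) he
        set k : ℕ := x.down.val + c.length with hk
        have hkle : k ≤ w.length := hsp.1
        refine Relation.ReflTransGen.head (b := ⟨⟨k, by omega⟩⟩) ?_ ?_
        · exact (ihs x _).2 ⟨c, hall c (by simp), by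
            rw [he]
            congr 1
            exact hsp.2.symm⟩
        · exact ihS _ (fun y hy => hall y (by simp [hy])) hsp.2

end Model

end RMPaux

/-- **Relational model property** (Pratt): if the relational interpretations of `e` and `f`
agree for every type `X` and every map `h : α → (X → X → Prop)`, then `e` and `f` agree in
every Kleene algebra. -/
theorem relational_model_property {α : Type*} (e f : RegularExpression α)
    (hrel : ∀ (X : Type*) (h : α → X → X → Prop), rinterp h e = rinterp h f) :
    ∀ (K : Type*) [KleeneAlgebra K] (h : α → K), interp h e = interp h f := by

  intro K _ h
  letI : DecidableEq α := Classical.decEq α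
  have hL : ∀ w : List α, w ∈ e.matches' ↔ w ∈ f.matches' := by
    intro w
    have hre := hrel (ULift (Fin (w.length + 1))) (RMPaux.chRel w)
    have key : ∀ g : RegularExpression α,
        (w ∈ g.matches' ↔
          rinterp (RMPaux.chRel w) g ⟨⟨0, Nat.succ_pos _⟩⟩ ⟨⟨w.length, Nat.lt_succ_self _⟩⟩) := by
      intro g
      rw [RMPaux.model_iff]
      constructor
      · intro hm
        exact ⟨w, hm, by
          show w.drop 0 = w ++ w.drop w.length
          rw [List.drop_zero, List.drop_length, List.append_nil]⟩
      · rintro ⟨u, hu, he⟩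
        have he' : w.drop 0 = u ++ w.drop w.length := he
        rw [List.drop_zero, List.drop_length, List.append_nil] at he'
        rwa [he']
    rw [key e, key f, hre]
  exact le_antisymm
    (RMPaux.le_of_lang_le h e f fun w hw => (hL w).1 hw)
    (RMPaux.le_of_lang_le h f e fun w hw => (hL w).2 hw)
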